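/- Consider the Hamiltonian H(L, Θ, P_L, P_Θ) = (1/2)(P_L²/4 + P_Θ²/L²) + L²(k/2 + 1 − cos Θ) with k = 4/3, on {L > 0} × ℝ³, with Hamilton's equations L' = P_L/4, Θ' = P_Θ/L², P_L' = P_Θ²/L³ − 2L(k/2 + 1 − cos Θ), P_Θ' = −L² sin Θ. Then the function Q(L, Θ, P_L, P_Θ) = (2/L)(L cos(Θ/2)·P_L − 2 sin(Θ/2)·P_Θ)·P_Θ + (8/3)L³ cos(Θ/2) sin Θ is a first integral: along every differentiable solution with L(t) > 0, the value of Q is constant in t. -/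

import Mathlib

/-- The third first integral Q = W₂ + A₀ for k = 4/3 (n = 2). -/
noncomputable def pendQ2 (L Θ PL PΘ : ℝ) : ℝ :=
  (2 / L) * (L * Real.cos (Θ / 2) * PL - 2 * Real.sin (Θ / 2) * PΘ) * PΘ
    + (8 / 3) * L ^ 3 * Real.cos (Θ / 2) * Real.sin Θ

theorem Q_is_first_integral_n_two
    (k : ℝ) (hk : k = 4 / 3) (L Θ PL PΘ : ℝ → ℝ)
    (hLpos : ∀ t, 0 < L t)
    (hL : ∀ t, HasDerivAt L (PL t / 4) t)
    (hΘ : ∀ t, HasDerivAt Θ (PΘ t / L t ^ 2) t)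
    (hPL : ∀ t, HasDerivAt PL
      (PΘ t ^ 2 / L t ^ 3 - 2 * L t * (k / 2 + 1 - Real.cos (Θ t))) t)
    (hPΘ : ∀ t, HasDerivAt PΘ (-(L t ^ 2) * Real.sin (Θ t)) t) :
    ∀ t₁ t₂ : ℝ, pendQ2 (L t₁) (Θ t₁) (PL t₁) (PΘ t₁)
      = pendQ2 (L t₂) (Θ t₂) (PL t₂) (PΘ t₂) := by
  subst hk
  set F : ℝ → ℝ := fun t => pendQ2 (L t) (Θ t) (PL t) (PΘ t) with hF
  have key : ∀ t, HasDerivAt F 0 t := by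
    intro t
    have hLne : L t ≠ 0 := (hLpos t).ne'
    have hΘ2 : HasDerivAt (fun t => Θ t / 2) (PΘ t / L t ^ 2 / 2) t := (hΘ t).div_const 2
    have hc : HasDerivAt (fun t => Real.cos (Θ t / 2))
        (-Real.sin (Θ t / 2) * (PΘ t / L t ^ 2 / 2)) t :=
      hΘ2.cos
    have hs : HasDerivAt (fun t => Real.sin (Θ t / 2))
        (Real.cos (Θ t / 2) * (PΘ t / L t ^ 2 / 2)) t :=
      hΘ2.sin
    have hσ : HasDerivAt (fun t => Real.sin (Θ t))
        (Real.cos (Θ t) * (PΘ t / L t ^ 2)) t :=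
      (Real.hasDerivAt_sin (Θ t)).comp t (hΘ t)
    have h1 : HasDerivAt (fun t => (2 : ℝ) / L t)
        (-(2 * (PL t / 4)) / L t ^ 2) t := by
      simpa using (hasDerivAt_const t (2:ℝ)).fun_div (hL t) hLne
    have h2 := (((hL t).mul hc).mul (hPL t)).sub
      (((hasDerivAt_const t (2:ℝ)).mul hs).mul (hPΘ t))
    have h3 : HasDerivAt (fun t => L t ^ 3) (3 * L t ^ 2 * (PL t / 4)) t := by
      have h3' := (hL t).pow 3; simp at h3'; exact h3'
    have hbig := ((h1.mul h2).mul (hPΘ t)).add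
      ((((hasDerivAt_const t ((8:ℝ)/3)).mul h3).mul hc).mul hσ)
    have hpyth : Real.sin (Θ t / 2) ^ 2 + Real.cos (Θ t / 2) ^ 2 = 1 :=
      Real.sin_sq_add_cos_sq _
    have hσ2 : Real.sin (Θ t) = 2 * Real.sin (Θ t / 2) * Real.cos (Θ t / 2) := by
      rw [show Θ t = 2 * (Θ t / 2) by ring, Real.sin_two_mul]; ring_nf
    have hκ2 : Real.cos (Θ t) = 1 - 2 * Real.sin (Θ t / 2) ^ 2 := by
      have h := Real.cos_two_mul (Θ t / 2)
      rw [show 2 * (Θ t / 2) = Θ t by ring] at h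
      rw [h]; linarith [hpyth]
    exact hbig.congr_deriv (by
      simp only [Pi.mul_apply, Pi.sub_apply]
      rw [hσ2, hκ2]
      field_simp
      ring)
  intro t₁ t₂
  have : F t₁ = F t₂ :=
    is_const_of_deriv_eq_zero (fun t => (key t).differentiableAt)
      (fun t => (key t).deriv) t₁ t₂
  simpa [hF] using this
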